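/- Let (G,I,O) be an open graph admitting a gflow, and suppose V ≠ O. Then there exists a non-output vertex u and a set K ⊆ O∖I with Odd(K) ∩ (V∖O) = {u}. In other words, if no non-output vertex can be corrected using only output vertices, then V = O or no gflow exists. -/

import Mathlib

open Set

variable {V : Type*}

def oddN (G : SimpleGraph V) (K : Set V) : Set V :=
  {u | Odd {v | v ∈ K ∧ G.Adj u v}.ncard}

def IsSPO (lt : V → V → Prop) : Prop :=
  (∀ a, ¬ lt a a) ∧ (∀ a b c, lt a b → lt b c → lt a c)

def IsCausalFlow (G : SimpleGraph V) (I O : Set V) (g : V → V) (lt : V → V → Prop) : Prop :=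
  IsSPO lt ∧ (∀ i, i ∉ O → g i ∉ I) ∧ (∀ i, i ∉ O → lt i (g i)) ∧
  (∀ i, i ∉ O → ∀ j, G.Adj (g i) j → j = i ∨ lt i j) ∧
  (∀ i, i ∉ O → G.Adj (g i) i)

def IsGFlow (G : SimpleGraph V) (I O : Set V) (g : V → Set V) (lt : V → V → Prop) : Prop :=
  IsSPO lt ∧ (∀ i, i ∉ O → (g i).Nonempty ∧ g i ∩ I = ∅) ∧
  (∀ i, i ∉ O → ∀ j ∈ g i, lt i j) ∧
  (∀ i, i ∉ O → ∀ j ∈ oddN G (g i), j = i ∨ lt i j) ∧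
  (∀ i, i ∉ O → i ∈ oddN G (g i))

def maxSet (lt : V → V → Prop) (X : Set V) : Set V :=
  {u ∈ X | ∀ v ∈ X, ¬ lt u v}

def rest (lt : V → V → Prop) : ℕ → Set V
  | 0 => Set.univ
  | k+1 => rest lt k \ maxSet lt (rest lt k)

def layer (lt : V → V → Prop) (k : ℕ) : Set V := maxSet lt (rest lt k)

def cumul (lt : V → V → Prop) (k : ℕ) : Set V := Set.univ \ rest lt (k+1)

def MoreDelayed (lt lt' : V → V → Prop) : Prop :=
  (∀ k, (cumul lt' k).ncard ≤ (cumul lt k).ncard) ∧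
  ∃ k, (cumul lt' k).ncard < (cumul lt k).ncard

noncomputable def flowDepth (lt : V → V → Prop) : ℕ := sInf {d | layer lt (d+1) = ∅}

def MaxDelayedCausalFlow (G : SimpleGraph V) (I O : Set V) (g : V → V) (lt : V → V → Prop) : Prop :=
  IsCausalFlow G I O g lt ∧
  ∀ g' lt', IsCausalFlow G I O g' lt' → ¬ MoreDelayed lt' lt

def MaxDelayedGFlow (G : SimpleGraph V) (I O : Set V) (g : V → Set V) (lt : V → V → Prop) : Prop :=
  IsGFlow G I O g lt ∧
  ∀ g' lt', IsGFlow G I O g' lt' → ¬ MoreDelayed lt' lt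


lemma exists_max_of_spo {V : Type*} (lt : V → V → Prop) (hspo : IsSPO lt)
    (S : Set V) (hfin : S.Finite) (hne : S.Nonempty) :
    ∃ u ∈ S, ∀ v ∈ S, ¬ lt u v := by
  revert hne
  refine Set.Finite.induction_on (motive := fun s _ => s.Nonempty → ∃ u ∈ s, ∀ v ∈ s, ¬ lt u v) S hfin (fun hne => absurd hne (by simp)) ?_
  intro a s _ _ ih _
  by_cases hse : s.Nonempty
  · obtain ⟨u, hu, hmax⟩ := ih hse
    by_cases hua : lt u a
    · refine ⟨a, Set.mem_insert _ _, ?_⟩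
      rintro v (rfl | hv)
      · exact hspo.1 v
      · exact fun hav => hmax v hv (hspo.2 _ _ _ hua hav)
    · refine ⟨u, Set.mem_insert_of_mem _ hu, ?_⟩
      rintro v (rfl | hv)
      · exact hua
      · exact hmax v hv
  · refine ⟨a, Set.mem_insert _ _, ?_⟩
    rintro v (rfl | hv)
    · exact hspo.1 v
    · exact absurd ⟨v, hv⟩ hse

theorem gflow_correctable_vertex {V : Type*} [Fintype V] (G : SimpleGraph V)
    (I O : Set V) (h : ∃ (g : V → Set V) (lt : V → V → Prop), IsGFlow G I O g lt)
    (hVO : (Set.univ : Set V) ≠ O) :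
    ∃ u, u ∉ O ∧ ∃ K ⊆ O \ I, oddN G K ∩ Oᶜ = {u} := by
  obtain ⟨g, lt, hspo, hg1, hg2, hg3, hg4⟩ := h
  have hne : Oᶜ.Nonempty := by
    rcases Set.nonempty_compl.mpr (by simpa using fun hOu => hVO hOu.symm) with ⟨u, hu⟩
    exact ⟨u, hu⟩
  obtain ⟨u, hu, hmax⟩ := exists_max_of_spo lt hspo Oᶜ (Set.toFinite _) hne
  refine ⟨u, hu, g u, ?_, ?_⟩
  · intro j hj
    have hlt := hg2 u hu j hj
    have hjO : j ∈ O := by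
      by_contra hjO
      exact hmax j hjO hlt
    have hjI : j ∉ I := fun hjI =>
      (Set.eq_empty_iff_forall_notMem.mp (hg1 u hu).2 j) ⟨hj, hjI⟩
    exact ⟨hjO, hjI⟩
  · ext j
    simp only [Set.mem_inter_iff, Set.mem_compl_iff, Set.mem_singleton_iff]
    constructor
    · rintro ⟨hjodd, hjO⟩
      rcases hg3 u hu j hjodd with rfl | hlt
      · rfl
      · exact absurd hlt (hmax j hjO)
    · rintro rfl
      exact ⟨hg4 j hu, hu⟩
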